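/- For every odd n ≥ 3, M(F_cy, D_3, n) = (n−2)!; that is, the maximum cardinality of a family of Hamilton cycles of K_n in which the union of any two distinct members has a vertex of degree 3 is exactly (n−2)!. -/

import Mathlib

/-- The edge set of the Hamilton cycle of the complete graph on `Fin n` that visits
the vertices cyclically in the order `σ 0, σ 1, …, σ (n-1), σ 0`. -/
def hamCycleEdges (n : ℕ) (σ : Equiv.Perm (Fin n)) : Finset (Sym2 (Fin n)) :=
  Finset.univ.image (fun i : Fin n =>
    s(σ i, σ ⟨((i : ℕ) + 1) % n, Nat.mod_lt _ i.pos⟩))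

/-- `E` is the edge set of a Hamilton cycle of the complete graph on `Fin n`. -/
def IsHamCycle (n : ℕ) (E : Finset (Sym2 (Fin n))) : Prop :=
  ∃ σ : Equiv.Perm (Fin n), E = hamCycleEdges n σ

/-- The degree of the vertex `v` in the graph on `Fin n` with edge set `E`. -/
def degIn (n : ℕ) (E : Finset (Sym2 (Fin n))) (v : Fin n) : ℕ :=
  (E.filter (fun e => v ∈ e)).card

open Finset Equiv
open Fin.CommRing Fin.NatCast

section Aux
variable {n : ℕ} [NeZero n]

lemma hamEq (σ : Equiv.Perm (Fin n)) :
    hamCycleEdges n σ = Finset.univ.image (fun i : Fin n => s(σ i, σ (i+1))) := by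
  unfold hamCycleEdges
  congr 1
  funext i
  congr 2
  apply Fin.ext
  simp [Fin.add_def, Fin.val_one']

lemma mem_ham (σ : Equiv.Perm (Fin n)) (i : Fin n) : s(σ i, σ (i+1)) ∈ hamCycleEdges n σ := by
  rw [hamEq]; exact mem_image_of_mem _ (mem_univ i)

lemma ham_elim {σ : Equiv.Perm (Fin n)} {e} (he : e ∈ hamCycleEdges n σ) :
    ∃ j, e = s(σ j, σ (j+1)) := by
  rw [hamEq] at he
  obtain ⟨j, _, hj⟩ := Finset.mem_image.mp he
  exact ⟨j, hj.symm⟩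

lemma fin_one_ne_zero' (hn : 3 ≤ n) : (1 : Fin n) ≠ 0 := by
  intro h
  have := congrArg Fin.val h
  rw [Fin.val_one', Fin.val_zero, Nat.mod_eq_of_lt (by omega)] at this
  omega

lemma fin_two_ne_zero (hn : 3 ≤ n) : (1 + 1 : Fin n) ≠ 0 := by
  intro h
  have := congrArg Fin.val h
  simp only [Fin.add_def, Fin.val_one', Fin.val_zero] at this
  rw [Nat.mod_eq_of_lt (show 1 < n by omega)] at this
  rw [Nat.mod_eq_of_lt (show 1+1 < n by omega)] at this
  omega

lemma step_ne (hn : 3 ≤ n) (i : Fin n) : i + 1 ≠ i := by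
  intro h
  have : (1 : Fin n) = 0 := by
    have := congrArg (· - i) h
    simpa [add_comm, add_sub_cancel_right] using this
  exact fin_one_ne_zero' hn this

lemma step2_ne (hn : 3 ≤ n) (i : Fin n) : i + 1 + 1 ≠ i := by
  intro h
  have : (1 + 1 : Fin n) = 0 := by
    have := congrArg (· - i) h
    simpa [add_assoc, add_comm, add_sub_cancel_right, sub_self, add_sub_assoc] using this
  exact fin_two_ne_zero hn this

end Aux
section Deg
variable {n : ℕ} [NeZero n]

lemma filter_ham (hn : 3 ≤ n) (σ : Equiv.Perm (Fin n)) (v : Fin n) :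
    (hamCycleEdges n σ).filter (fun e => v ∈ e) =
      {s(σ (σ.symm v - 1), v), s(v, σ (σ.symm v + 1))} := by
  have hv : σ (σ.symm v) = v := σ.apply_symm_apply v
  ext e
  simp only [Finset.mem_filter, Finset.mem_insert, Finset.mem_singleton]
  constructor
  · rintro ⟨he, hve⟩
    obtain ⟨j, rfl⟩ := ham_elim he
    rcases Sym2.mem_iff.mp hve with h | h
    · right
      have hj : σ.symm v = j := σ.symm_apply_eq.mpr h
      rw [← hj] at h ⊢
      rw [← h]
    · left
      have hj : σ.symm v = j + 1 := σ.symm_apply_eq.mpr h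
      have hj' : j = σ.symm v - 1 := by rw [hj]; ring
      rw [← hj', ← hj, hv]
  · rintro (rfl | rfl)
    · constructor
      · have := mem_ham σ (σ.symm v - 1)
        rwa [sub_add_cancel, hv] at this
      · simp
    · constructor
      · have := mem_ham σ (σ.symm v)
        rwa [hv] at this
      · simp

lemma degIn_ham (hn : 3 ≤ n) (σ : Equiv.Perm (Fin n)) (v : Fin n) :
    degIn n (hamCycleEdges n σ) v = 2 := by
  have hv : σ (σ.symm v) = v := σ.apply_symm_apply v
  rw [degIn, filter_ham hn]
  rw [Finset.card_insert_of_notMem, Finset.card_singleton]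
  simp only [Finset.mem_singleton]
  intro h
  rcases Sym2.eq_iff.mp h with ⟨h1, h2⟩ | ⟨h1, -⟩
  · -- σ (i-1) = v = σ i and v = σ (i+1)
    have : σ.symm v - 1 = σ.symm v := σ.injective (by rw [h1, hv])
    have h1' : σ.symm v - 1 + 1 = σ.symm v + 1 := by rw [this]
    rw [sub_add_cancel] at h1'
    exact step_ne hn (σ.symm v) (h1'.symm) |>.elim
  · -- σ (i-1) = σ (i+1)
    have : σ.symm v - 1 = σ.symm v + 1 := σ.injective h1
    have : σ.symm v = σ.symm v + 1 + 1 := by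
      rw [← this]; ring
    exact step2_ne hn (σ.symm v) this.symm

lemma deg_union_disjoint (hn : 3 ≤ n) {σ π : Equiv.Perm (Fin n)}
    (hd : Disjoint (hamCycleEdges n σ) (hamCycleEdges n π)) (v : Fin n) :
    degIn n (hamCycleEdges n σ ∪ hamCycleEdges n π) v = 4 := by
  rw [degIn, Finset.filter_union, Finset.card_union_of_disjoint
    (Finset.disjoint_filter_filter hd)]
  have h1 := degIn_ham hn σ v
  have h2 := degIn_ham hn π v
  rw [degIn] at h1 h2
  omega

lemma edges_eq_or_disjoint (hn : 3 ≤ n) {σ π : Equiv.Perm (Fin n)} {v : Fin n}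
    (h3 : degIn n (hamCycleEdges n σ ∪ hamCycleEdges n π) v ≠ 3) :
    (hamCycleEdges n σ).filter (fun e => v ∈ e) = (hamCycleEdges n π).filter (fun e => v ∈ e) ∨
    Disjoint ((hamCycleEdges n σ).filter (fun e => v ∈ e))
      ((hamCycleEdges n π).filter (fun e => v ∈ e)) := by
  set A := (hamCycleEdges n σ).filter (fun e => v ∈ e) with hA
  set B := (hamCycleEdges n π).filter (fun e => v ∈ e) with hB
  have hcA : A.card = 2 := degIn_ham hn σ v
  have hcB : B.card = 2 := degIn_ham hn π v
  have hu : degIn n (hamCycleEdges n σ ∪ hamCycleEdges n π) v = (A ∪ B).card := by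
    rw [degIn, Finset.filter_union]
  have hsum : (A ∪ B).card + (A ∩ B).card = 4 := by
    rw [Finset.card_union_add_card_inter, hcA, hcB]
  have hge : 2 ≤ (A ∪ B).card := hcA ▸ Finset.card_le_card Finset.subset_union_left
  rw [hu] at h3
  have hcases : (A ∪ B).card = 2 ∨ (A ∪ B).card = 4 := by omega
  rcases hcases with h | h
  · left
    have e1 : A ∩ B = A := Finset.eq_of_subset_of_card_le Finset.inter_subset_left (by omega)
    have e2 : A ∩ B = B := Finset.eq_of_subset_of_card_le Finset.inter_subset_right (by omega)
    rw [← e1, e2]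
  · right
    have hi : (A ∩ B).card = 0 := by omega
    rw [Finset.disjoint_iff_inter_eq_empty]
    exact Finset.card_eq_zero.mp hi
end Deg
section Rigid
variable {n : ℕ} [NeZero n]

/-- If two Hamilton cycles agree on the first two vertices and at each vertex their
edge sets are equal or disjoint, then they are equal. -/
lemma rigid (hn : 3 ≤ n) {σ π : Equiv.Perm (Fin n)}
    (h0 : σ 0 = π 0) (h1 : σ 1 = π 1)
    (H : ∀ v : Fin n,
      (hamCycleEdges n σ).filter (fun e => v ∈ e) = (hamCycleEdges n π).filter (fun e => v ∈ e) ∨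
      Disjoint ((hamCycleEdges n σ).filter (fun e => v ∈ e))
        ((hamCycleEdges n π).filter (fun e => v ∈ e))) :
    σ = π := by
  have key : ∀ i : ℕ, σ (i : Fin n) = π (i : Fin n) ∧
      σ ((i : Fin n) + 1) = π ((i : Fin n) + 1) := by
    intro i
    induction i with
    | zero => simpa using ⟨h0, h1⟩
    | succ i ih =>
      obtain ⟨ih0, ih1⟩ := ih
      push_cast
      set j : Fin n := (i : Fin n) with hj
      refine ⟨ih1, ?_⟩
      set v : Fin n := σ (j + 1) with hv
      have hvπ : v = π (j + 1) := ih1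
      -- the common edge s(σ j, v) lies in both filters
      have hedge1 : s(σ j, v) ∈ (hamCycleEdges n σ).filter (fun e => v ∈ e) := by
        rw [Finset.mem_filter]
        exact ⟨mem_ham σ j, by simp⟩
      have hedge2 : s(σ j, v) ∈ (hamCycleEdges n π).filter (fun e => v ∈ e) := by
        rw [Finset.mem_filter]
        refine ⟨?_, by simp⟩
        have := mem_ham π j
        rwa [← ih0, ← hvπ] at this
      have heq : (hamCycleEdges n σ).filter (fun e => v ∈ e)
          = (hamCycleEdges n π).filter (fun e => v ∈ e) := by
        rcases H v with h | h
        · exact h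
        · exact absurd (h.le_bot (by simp [Finset.mem_inter, hedge1, hedge2] : s(σ j, v) ∈ _)) (by simp)
      -- now the next edge of σ is an edge of π
      have hnext : s(v, σ (j + 1 + 1)) ∈ hamCycleEdges n π := by
        have h1' : s(v, σ (j + 1 + 1)) ∈ (hamCycleEdges n σ).filter (fun e => v ∈ e) := by
          rw [Finset.mem_filter]
          exact ⟨by rw [hv]; exact mem_ham σ (j+1), by simp⟩
        rw [heq] at h1'
        exact (Finset.mem_filter.mp h1').1
      obtain ⟨k, hk⟩ := ham_elim hnext
      rcases Sym2.eq_iff.mp hk with ⟨ha, hb⟩ | ⟨ha, hb⟩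
      · -- v = π k, σ (j+2) = π (k+1)
        have : k = j + 1 := π.injective (by rw [← ha, hvπ])
        rw [this] at hb
        exact hb
      · -- v = π (k+1), σ (j+2) = π k
        exfalso
        have hk1 : k + 1 = j + 1 := π.injective (by rw [← ha, hvπ])
        have hkj : k = j := by
          have := congrArg (· - 1) hk1
          simpa using this
        rw [hkj, ← ih0] at hb
        have := σ.injective hb
        exact step2_ne hn j this
  apply Equiv.ext
  intro x
  have := (key x.val).1
  rwa [Fin.cast_val_eq_self] at this

lemma ham_inj (hn : 3 ≤ n) {σ π : Equiv.Perm (Fin n)}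
    (h0 : σ 0 = π 0) (h1 : σ 1 = π 1)
    (he : hamCycleEdges n σ = hamCycleEdges n π) : σ = π := by
  apply rigid hn h0 h1
  intro v
  left
  rw [he]

lemma deg3_of_shared (hn : 3 ≤ n) {σ π : Equiv.Perm (Fin n)}
    (h0 : σ 0 = π 0) (h1 : σ 1 = π 1)
    (hne : hamCycleEdges n σ ≠ hamCycleEdges n π) :
    ∃ v, degIn n (hamCycleEdges n σ ∪ hamCycleEdges n π) v = 3 := by
  by_contra hc
  push_neg at hc
  exact hne (congrArg (hamCycleEdges n) (rigid hn h0 h1 (fun v => edges_eq_or_disjoint hn (hc v))))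
end Rigid
section Count
variable {n : ℕ} [NeZero n]

lemma card_fix (hn : 3 ≤ n) :
    (Finset.univ.filter (fun σ : Equiv.Perm (Fin n) => σ 0 = 0 ∧ σ 1 = 1)).card
      = Nat.factorial (n - 2) := by
  classical
  rw [← Fintype.card_subtype]
  have e1 : {σ : Equiv.Perm (Fin n) // σ 0 = 0 ∧ σ 1 = 1}
      ≃ {f : Equiv.Perm (Fin n) // ∀ a, ¬(a ≠ 0 ∧ a ≠ 1) → f a = a} := by
    apply Equiv.subtypeEquivRight
    intro σ
    constructor
    · rintro ⟨hσ0, hσ1⟩ a ha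
      push_neg at ha
      by_cases h : a = 0
      · rw [h, hσ0]
      · rw [ha h, hσ1]
    · intro h
      exact ⟨h 0 (by simp), h 1 (by simp)⟩
  have e2 : {f : Equiv.Perm (Fin n) // ∀ a, ¬(a ≠ 0 ∧ a ≠ 1) → f a = a}
      ≃ Equiv.Perm {x : Fin n // x ≠ 0 ∧ x ≠ 1} :=
    (Equiv.Perm.subtypeEquivSubtypePerm (fun a : Fin n => a ≠ 0 ∧ a ≠ 1)).symm
  rw [Fintype.card_congr (e1.trans e2), Fintype.card_perm]
  congr 1
  rw [Fintype.card_subtype]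
  have : (Finset.univ.filter (fun x : Fin n => x ≠ 0 ∧ x ≠ 1)) = Finset.univ \ {0, 1} := by
    ext x
    simp [and_comm]
  rw [this, Finset.card_sdiff_of_subset (by simp)]
  rw [Finset.card_univ, Fintype.card_fin]
  congr 1
  rw [Finset.card_insert_of_notMem (by simpa using (fin_one_ne_zero' hn).symm),
    Finset.card_singleton]
end Count
section Mul
variable {n : ℕ} [NeZero n]

lemma ham_mul (g τ : Equiv.Perm (Fin n)) :
    hamCycleEdges n (g * τ) = (hamCycleEdges n τ).image (Sym2.map g) := by
  rw [hamEq, hamEq, Finset.image_image]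
  rfl

lemma reindex_ham (τ : Equiv.Perm (Fin n)) (e : Equiv.Perm (Fin n)) :
    (Finset.univ.image (fun i => s(τ (e i), τ (e i + 1)))) = hamCycleEdges n τ := by
  rw [hamEq]
  have h : (fun i => s(τ (e i), τ (e i + 1))) = (fun j : Fin n => s(τ j, τ (j+1))) ∘ e := rfl
  rw [h, ← Finset.image_image, Finset.image_univ_equiv]

def dih (n : ℕ) [NeZero n] (c : Fin n) (b : Bool) : Equiv.Perm (Fin n) :=
  (if b then Equiv.neg (Fin n) else Equiv.refl (Fin n)).trans (Equiv.addRight c)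

lemma dih_apply (c : Fin n) (b : Bool) (i : Fin n) :
    dih n c b i = (if b then -i else i) + c := by
  cases b <;> simp [dih]

lemma ham_dih (τ : Equiv.Perm (Fin n)) (c : Fin n) (b : Bool) :
    hamCycleEdges n (τ * dih n c b) = hamCycleEdges n τ := by
  cases b
  · rw [hamEq]
    have h : ∀ i : Fin n, s((τ * dih n c false) i, (τ * dih n c false) (i+1))
        = s(τ ((Equiv.addRight c) i), τ ((Equiv.addRight c) i + 1)) := by
      intro i
      simp only [Equiv.Perm.mul_apply, dih_apply, if_neg Bool.false_ne_true]
      have : i + 1 + c = i + c + 1 := by ring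
      rw [this]
      rfl
    rw [Finset.image_congr (fun i _ => h i)]
    exact reindex_ham τ (Equiv.addRight c)
  · rw [hamEq]
    set e : Equiv.Perm (Fin n) := (Equiv.neg (Fin n)).trans (Equiv.addRight (c - 1)) with he
    have h : ∀ i : Fin n, s((τ * dih n c true) i, (τ * dih n c true) (i+1))
        = s(τ (e i), τ (e i + 1)) := by
      intro i
      simp only [Equiv.Perm.mul_apply, dih_apply, if_pos, he, Equiv.trans_apply,
        Equiv.neg_apply, Equiv.coe_addRight]
      have h1 : -(i + 1) + c = -i + (c - 1) := by ring
      have h2 : -i + c = -i + (c - 1) + 1 := by ring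
      rw [h1, h2]
      exact Sym2.eq_swap
    rw [Finset.image_congr (fun i _ => h i)]
    exact reindex_ham τ e

lemma dih_inj (hn : 3 ≤ n) : Function.Injective (fun p : Fin n × Bool => dih n p.1 p.2) := by
  rintro ⟨c, b⟩ ⟨c', b'⟩ h
  simp only at h
  have h0 := DFunLike.congr_fun h 0
  rw [dih_apply, dih_apply] at h0
  have hc : c = c' := by
    cases b <;> cases b' <;> simpa using h0
  subst hc
  have hb : b = b' := by
    by_contra hbb
    have h1 := DFunLike.congr_fun h 1
    rw [dih_apply, dih_apply] at h1
    have : (-1 : Fin n) + c = 1 + c ∨ (1 : Fin n) + c = -1 + c := by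
      cases b <;> cases b' <;> simp only [if_pos, if_neg, Bool.false_ne_true, reduceIte] at h1
      · exact absurd rfl hbb
      · exact Or.inr h1
      · exact Or.inl h1
      · exact absurd rfl hbb
    have h2 : (1 + 1 : Fin n) = 0 := by
      rcases this with h | h
      · have := add_right_cancel h
        linear_combination -this
      · have := add_right_cancel h
        linear_combination this
    exact fin_two_ne_zero hn h2
  rw [hb]

end Mul
section Fiber
variable {n : ℕ} [NeZero n]

lemma fiber_ge (hn : 3 ≤ n) (τ ρσ : Equiv.Perm (Fin n)) :
    2 * n ≤ (Finset.univ.filter (fun g : Equiv.Perm (Fin n) =>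
      hamCycleEdges n (g * ρσ) = hamCycleEdges n τ)).card := by
  classical
  have hinj : Function.Injective (fun p : Fin n × Bool => τ * dih n p.1 p.2 * ρσ⁻¹) := by
    intro p q h
    simp only at h
    exact dih_inj hn (mul_left_cancel (mul_right_cancel h))
  have hsub : (Finset.univ : Finset (Fin n × Bool)).image (fun p => τ * dih n p.1 p.2 * ρσ⁻¹)
      ⊆ Finset.univ.filter (fun g => hamCycleEdges n (g * ρσ) = hamCycleEdges n τ) := by
    intro g hg
    simp only [Finset.mem_image] at hg
    obtain ⟨p, -, rfl⟩ := hg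
    simp only [Finset.mem_filter, Finset.mem_univ, true_and]
    rw [inv_mul_cancel_right]
    exact ham_dih τ p.1 p.2
  have := Finset.card_le_card hsub
  rwa [Finset.card_image_of_injective _ hinj, Finset.card_univ, Fintype.card_prod,
    Fintype.card_fin, Fintype.card_bool, mul_comm] at this
end Fiber
section Walecki
variable (m : ℕ) [NeZero (2*m)]

lemma m_pos : 0 < m := by
  have := NeZero.ne (2*m)
  omega

def wι (a : ZMod (2*m)) : Fin (2*m+1) := ⟨a.val, by have := a.val_lt; omega⟩

def winf : Fin (2*m+1) := ⟨2*m, by omega⟩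

lemma wι_inj : Function.Injective (wι m) := by
  intro a b h
  exact ZMod.val_injective _ (congrArg Fin.val h)

lemma wι_ne_winf (a : ZMod (2*m)) : wι m a ≠ winf m := by
  intro h
  have := congrArg Fin.val h
  simp only [wι, winf] at this
  have := a.val_lt
  omega

/-- cast back: the value of `wι` -/
lemma wι_val (a : ZMod (2*m)) : (wι m a).val = a.val := rfl

def wrotFun : Fin (2*m+1) → Fin (2*m+1) := fun v =>
  if v.val = 2*m then v else wι m ((v.val : ZMod (2*m)) + 1)

lemma wrotFun_inj : Function.Injective (wrotFun m) := by
  intro u v h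
  unfold wrotFun at h
  by_cases hu : u.val = 2*m <;> by_cases hv : v.val = 2*m
  · exact Fin.ext (by omega)
  · exfalso
    rw [if_pos hu, if_neg hv] at h
    have := congrArg Fin.val h
    rw [hu, wι_val] at this
    have := (((v.val : ZMod (2*m)) + 1)).val_lt
    omega
  · exfalso
    rw [if_neg hu, if_pos hv] at h
    have := congrArg Fin.val h
    rw [hv, wι_val] at this
    have := (((u.val : ZMod (2*m)) + 1)).val_lt
    omega
  · rw [if_neg hu, if_neg hv] at h
    have h2 := wι_inj m h
    have h3 : (u.val : ZMod (2*m)) = (v.val : ZMod (2*m)) := by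
      have := congrArg (· - 1) h2
      simpa using this
    have hu' : ((u.val : ZMod (2*m))).val = u.val := ZMod.val_cast_of_lt (by have := u.isLt; omega)
    have hv' : ((v.val : ZMod (2*m))).val = v.val := ZMod.val_cast_of_lt (by have := v.isLt; omega)
    apply Fin.ext
    rw [← hu', ← hv', h3]

noncomputable def wrot : Equiv.Perm (Fin (2*m+1)) :=
  Equiv.ofBijective _ (Finite.injective_iff_bijective.mp (wrotFun_inj m))

lemma wrot_winf : wrot m (winf m) = winf m := by
  simp [wrot, Equiv.ofBijective_apply, wrotFun, winf]

lemma wrot_wι (a : ZMod (2*m)) : wrot m (wι m a) = wι m (a + 1) := by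
  have h : a.val ≠ 2*m := by have := a.val_lt; omega
  simp only [wrot, Equiv.ofBijective_apply, wrotFun, wι_val]
  refine (if_neg h).trans ?_
  congr 1
  rw [ZMod.natCast_val, ZMod.cast_id]

def wseqFun : Fin (2*m+1) → Fin (2*m+1) := fun j =>
  if j.val = 0 then winf m
  else if j.val % 2 = 0 then wι m ((j.val/2 : ℕ) : ZMod (2*m))
  else wι m (-((j.val/2 : ℕ) : ZMod (2*m)))

lemma wseqFun_inj : Function.Injective (wseqFun m) := by
  have hm := m_pos m
  intro u v h
  unfold wseqFun at h
  have hu2 : u.val < 2*m+1 := u.isLt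
  have hv2 : v.val < 2*m+1 := v.isLt
  by_cases hu : u.val = 0 <;> by_cases hv : v.val = 0
  · exact Fin.ext (by omega)
  · exfalso
    rw [if_pos hu, if_neg hv] at h
    split at h <;> exact wι_ne_winf m _ h.symm
  · exfalso
    rw [if_neg hu, if_pos hv] at h
    split at h <;> exact wι_ne_winf m _ h
  · rw [if_neg hu, if_neg hv] at h
    -- val computations
    have heval : ∀ w : Fin (2*m+1), ((w.val/2 : ℕ) : ZMod (2*m)).val = w.val/2 := by
      intro w
      have := w.isLt
      exact ZMod.val_cast_of_lt (by omega)
    have hoval : ∀ w : Fin (2*m+1), w.val % 2 = 1 →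
        (-((w.val/2 : ℕ) : ZMod (2*m))).val = if w.val/2 = 0 then 0 else 2*m - w.val/2 := by
      intro w hw
      rw [ZMod.neg_val, heval]
      congr 1
      simp only [eq_iff_iff]
      constructor
      · intro hc
        have := congrArg ZMod.val hc
        rw [heval w] at this
        simpa using this
      · intro hc
        rw [hc]
        simp
    by_cases hue : u.val % 2 = 0 <;> by_cases hve : v.val % 2 = 0
    · rw [if_pos hue, if_pos hve] at h
      have := congrArg Fin.val h
      rw [wι_val, wι_val, heval, heval] at this
      exact Fin.ext (by omega)
    · exfalso
      rw [if_pos hue, if_neg hve] at h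
      have hval := congrArg Fin.val h
      rw [wι_val, wι_val, heval, hoval v (by omega)] at hval
      split at hval <;> omega
    · exfalso
      rw [if_neg hue, if_pos hve] at h
      have hval := congrArg Fin.val h
      rw [wι_val, wι_val, heval, hoval u (by omega)] at hval
      split at hval <;> omega
    · rw [if_neg hue, if_neg hve] at h
      have hval := congrArg Fin.val h
      rw [wι_val, wι_val, hoval u (by omega), hoval v (by omega)] at hval
      split at hval <;> split at hval <;> exact Fin.ext (by omega)

noncomputable def wσ : Equiv.Perm (Fin (2*m+1)) :=
  Equiv.ofBijective _ (Finite.injective_iff_bijective.mp (wseqFun_inj m))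

end Walecki
section WCls
variable (m : ℕ) [NeZero (2*m)]

def wcls (t : ℕ) (e : Sym2 (Fin (2*m+1))) : Prop :=
  e = s(winf m, wι m ((t : ℕ) : ZMod (2*m))) ∨
  e = s(winf m, wι m ((t + m : ℕ) : ZMod (2*m))) ∨
  ∃ x y : ZMod (2*m), e = s(wι m x, wι m y) ∧
    (x + y = ((2*t : ℕ) : ZMod (2*m)) ∨ x + y = ((2*t+1 : ℕ) : ZMod (2*m)))

lemma wcls_step (t : ℕ) (e : Sym2 (Fin (2*m+1))) (h : wcls m t e) :
    wcls m (t+1) (Sym2.map (wrot m) e) := by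
  rcases h with h | h | ⟨x, y, h, hs⟩
  · left
    rw [h, Sym2.map_pair_eq, wrot_winf, wrot_wι]
    congr 2
    push_cast
    ring
  · right; left
    rw [h, Sym2.map_pair_eq, wrot_winf, wrot_wι]
    congr 2
    push_cast
    ring
  · right; right
    refine ⟨x + 1, y + 1, ?_, ?_⟩
    · rw [h, Sym2.map_pair_eq, wrot_wι, wrot_wι]
    · rcases hs with hs | hs
      · left
        rw [show x + 1 + (y + 1) = x + y + 2 by ring, hs]
        push_cast
        ring
      · right
        rw [show x + 1 + (y + 1) = x + y + 2 by ring, hs]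
        push_cast
        ring

lemma wcls_base : ∀ e ∈ hamCycleEdges (2*m+1) (wσ m), wcls m 0 e := by
  have hm := m_pos m
  intro e he
  obtain ⟨j, rfl⟩ := ham_elim he
  have hwσ : ∀ i : Fin (2*m+1), wσ m i = wseqFun m i := fun i => rfl
  set J := j.val with hJ
  have hJlt : J < 2*m+1 := j.isLt
  have hJ1 : (j + 1 : Fin (2*m+1)).val = (J + 1) % (2*m+1) := by
    have h1m : (1 : ℕ) % (2*m+1) = 1 := Nat.mod_eq_of_lt (by omega)
    simp [Fin.add_def, Fin.val_one', h1m, hJ]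
  by_cases h0 : J = 0
  · -- e = s(winf, wι 0)
    left
    have h1 : (j + 1 : Fin (2*m+1)).val = 1 := by rw [hJ1, h0]; exact Nat.mod_eq_of_lt (by omega)
    rw [hwσ, hwσ]
    unfold wseqFun
    rw [if_pos h0, if_neg (by omega : (j+1 : Fin (2*m+1)).val ≠ 0)]
    rw [if_neg (by omega : ¬ (j+1 : Fin (2*m+1)).val % 2 = 0)]
    congr 2
    rw [h1]
    norm_num
  · by_cases h2m : J = 2*m
    · -- e = s(wι m, winf)
      right; left
      have h1 : (j + 1 : Fin (2*m+1)).val = 0 := by rw [hJ1, h2m]; simp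
      rw [hwσ, hwσ]
      unfold wseqFun
      rw [if_neg h0, if_pos (by omega : J % 2 = 0), if_pos h1]
      rw [Sym2.eq_swap]
      have : (j.val)/2 = 0 + m := by omega
      rw [this]
    · -- inner edge
      right; right
      have h1 : (j + 1 : Fin (2*m+1)).val = J + 1 := by rw [hJ1]; exact Nat.mod_eq_of_lt (by omega)
      have h1ne : (j + 1 : Fin (2*m+1)).val ≠ 0 := by omega
      by_cases hpar : J % 2 = 0
      · -- J even: s(wι (J/2), wι (-(J+1)/2)) with (J+1)/2 = J/2, sum 0
        refine ⟨((J/2 : ℕ) : ZMod (2*m)), -(((J+1)/2 : ℕ) : ZMod (2*m)), ?_, ?_⟩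
        · rw [hwσ, hwσ]
          unfold wseqFun
          rw [if_neg h0, if_pos hpar, if_neg h1ne, if_neg (by omega : ¬ (j+1 : Fin (2*m+1)).val % 2 = 0)]
          rw [h1]
        · left
          have : (J+1)/2 = J/2 := by omega
          rw [this]
          push_cast
          ring
      · -- J odd
        refine ⟨-((J/2 : ℕ) : ZMod (2*m)), (((J+1)/2 : ℕ) : ZMod (2*m)), ?_, ?_⟩
        · rw [hwσ, hwσ]
          unfold wseqFun
          rw [if_neg h0, if_neg hpar, if_neg h1ne, if_pos (by omega : (j+1 : Fin (2*m+1)).val % 2 = 0)]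
          rw [h1]
        · right
          have : (J+1)/2 = J/2 + 1 := by omega
          rw [this]
          push_cast
          ring

lemma wclass_of_mem (k : ℕ) :
    ∀ e ∈ hamCycleEdges (2*m+1) ((wrot m)^k * wσ m), wcls m k e := by
  induction k with
  | zero => simpa using wcls_base m
  | succ k ih =>
    intro e he
    rw [pow_succ', mul_assoc, ham_mul] at he
    obtain ⟨e', he', rfl⟩ := Finset.mem_image.mp he
    exact wcls_step m k e' (ih e' he')

lemma cast_inj_2m {a b : ℕ} (ha : a < 2*m) (hb : b < 2*m)
    (h : (a : ZMod (2*m)) = (b : ZMod (2*m))) : a = b := by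
  have := congrArg ZMod.val h
  rwa [ZMod.val_cast_of_lt ha, ZMod.val_cast_of_lt hb] at this

lemma wcls_disj {t t' : ℕ} (ht : t < m) (ht' : t' < m) (hne : t ≠ t')
    (e : Sym2 (Fin (2*m+1))) (h1 : wcls m t e) (h2 : wcls m t' e) : False := by
  have hm := m_pos m
  have hinf : ∀ (p q : ZMod (2*m)), s(winf m, wι m p) = s(winf m, wι m q) → p = q := by
    intro p q h
    rcases Sym2.eq_iff.mp h with ⟨-, h⟩ | ⟨h, -⟩
    · exact wι_inj m h
    · exact absurd h.symm (wι_ne_winf m q)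
  have hmix : ∀ (p : ZMod (2*m)) (x y : ZMod (2*m)),
      s(winf m, wι m p) = s(wι m x, wι m y) → False := by
    intro p x y h
    rcases Sym2.eq_iff.mp h with ⟨h, -⟩ | ⟨h, -⟩
    · exact wι_ne_winf m x h.symm
    · exact wι_ne_winf m y h.symm
  rcases h1 with h1 | h1 | ⟨x, y, h1, hs1⟩ <;> rcases h2 with h2 | h2 | ⟨x', y', h2, hs2⟩
  · exact hne (cast_inj_2m m (by omega) (by omega) (hinf _ _ (h1 ▸ h2 ▸ rfl : _)))
  · have := cast_inj_2m m (by omega) (by omega) (hinf _ _ ((h1.symm.trans h2)))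
    omega
  · exact hmix _ _ _ (h1.symm.trans h2)
  · have := cast_inj_2m m (by omega) (by omega) (hinf _ _ ((h1.symm.trans h2)))
    omega
  · have := cast_inj_2m m (by omega) (by omega) (hinf _ _ ((h1.symm.trans h2)))
    omega
  · exact hmix _ _ _ (h1.symm.trans h2)
  · exact hmix _ _ _ (h2.symm.trans h1)
  · exact hmix _ _ _ (h2.symm.trans h1)
  · -- both inner
    have hsum : x + y = x' + y' := by
      rcases Sym2.eq_iff.mp (h1.symm.trans h2) with ⟨ha, hb⟩ | ⟨ha, hb⟩
      · rw [wι_inj m ha, wι_inj m hb]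
      · rw [wι_inj m ha, wι_inj m hb]; ring
    rcases hs1 with hs1 | hs1 <;> rcases hs2 with hs2 | hs2 <;>
      · have h' := (hs1.symm.trans hsum).trans hs2
        have := cast_inj_2m m (show _ < 2*m by omega) (show _ < 2*m by omega) h'
        omega
end WCls
/-- For every odd `n ≥ 3`, the maximum cardinality of a family of Hamilton cycles of
`K_n` in which the union of any two distinct members has a vertex of degree 3 is
exactly `(n−2)!`. -/
theorem stmt7 (n : ℕ) (hn : 3 ≤ n) (hodd : Odd n) :
    IsGreatest {k : ℕ | ∃ F : Finset (Finset (Sym2 (Fin n))),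
        (∀ E ∈ F, IsHamCycle n E) ∧
        (∀ E₁ ∈ F, ∀ E₂ ∈ F, E₁ ≠ E₂ → ∃ v : Fin n, degIn n (E₁ ∪ E₂) v = 3) ∧
        F.card = k}
      (Nat.factorial (n - 2)) := by
  classical
  obtain ⟨m, rfl⟩ := hodd
  have hm1 : 1 ≤ m := by omega
  haveI : NeZero (2*m+1) := ⟨by omega⟩
  haveI : NeZero (2*m) := ⟨by omega⟩
  constructor
  · -- membership: family of all Hamilton cycles through the edge s(0,1)
    refine ⟨Finset.image (fun σ => hamCycleEdges (2*m+1) σ)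
      (Finset.univ.filter (fun σ : Equiv.Perm (Fin (2*m+1)) => σ 0 = 0 ∧ σ 1 = 1)),
      ?_, ?_, ?_⟩
    · intro E hE
      obtain ⟨σ, -, rfl⟩ := Finset.mem_image.mp hE
      exact ⟨σ, rfl⟩
    · intro E₁ h₁ E₂ h₂ hne
      obtain ⟨σ, hσ, rfl⟩ := Finset.mem_image.mp h₁
      obtain ⟨π, hπ, rfl⟩ := Finset.mem_image.mp h₂
      rw [Finset.mem_filter] at hσ hπ
      exact deg3_of_shared hn (hσ.2.1.trans hπ.2.1.symm) (hσ.2.2.trans hπ.2.2.symm) hne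
    · rw [Finset.card_image_of_injOn, card_fix hn]
      intro σ hσ π hπ he
      simp only [Finset.coe_filter, Set.mem_setOf_eq] at hσ hπ
      exact ham_inj hn (hσ.2.1.trans hπ.2.1.symm) (hσ.2.2.trans hπ.2.2.symm) he
  · -- upper bound
    rintro k ⟨F, hHam, hDeg, rfl⟩
    set T : Finset (Equiv.Perm (Fin (2*m+1)) × ℕ) :=
      (Finset.univ ×ˢ Finset.range m).filter
        (fun p => hamCycleEdges (2*m+1) (p.1 * ((wrot m)^p.2 * wσ m)) ∈ F) with hT
    -- base disjointness
    have hdisj : ∀ (g : Equiv.Perm (Fin (2*m+1))) {k k' : ℕ}, k < m → k' < m → k ≠ k' →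
        Disjoint (hamCycleEdges (2*m+1) (g * ((wrot m)^k * wσ m)))
          (hamCycleEdges (2*m+1) (g * ((wrot m)^k' * wσ m))) := by
      intro g k k' hk hk' hne
      rw [ham_mul g ((wrot m)^k * wσ m), ham_mul g ((wrot m)^k' * wσ m),
        Finset.disjoint_image (Sym2.map.injective g.injective)]
      rw [Finset.disjoint_left]
      intro e h1 h2
      exact wcls_disj m hk hk' hne e (wclass_of_mem m k e h1) (wclass_of_mem m k' e h2)
    -- Step A : T.card ≤ (2m+1)!
    have hA : T.card ≤ Nat.factorial (2*m+1) := by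
      rw [Finset.card_eq_sum_card_fiberwise
        (f := Prod.fst) (t := Finset.univ) (fun p _ => Finset.mem_univ _)]
      have hbound : ∀ g ∈ (Finset.univ : Finset (Equiv.Perm (Fin (2*m+1)))),
          (T.filter (fun p => p.1 = g)).card ≤ 1 := by
            intro g _
            rw [Finset.card_le_one]
            intro p hp q hq
            rw [Finset.mem_filter] at hp hq
            obtain ⟨hpT, hp1⟩ := hp
            obtain ⟨hqT, hq1⟩ := hq
            rw [hT, Finset.mem_filter, Finset.mem_product, Finset.mem_range] at hpT hqT
            have : p.2 = q.2 := by
              by_contra hne2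
              have hd := hdisj g hpT.1.2 hqT.1.2 hne2
              rw [hp1] at hpT
              rw [hq1] at hqT
              have hnes : hamCycleEdges (2*m+1) (g * ((wrot m)^p.2 * wσ m))
                  ≠ hamCycleEdges (2*m+1) (g * ((wrot m)^q.2 * wσ m)) := by
                intro hcon
                have hmem := mem_ham (g * ((wrot m)^p.2 * wσ m)) 0
                exact Finset.disjoint_left.mp hd hmem (hcon ▸ hmem)
              obtain ⟨v, hv⟩ := hDeg _ hpT.2 _ hqT.2 hnes
              have := deg_union_disjoint hn hd v
              omega
            exact Prod.ext (hp1.trans hq1.symm) this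
      calc ∑ g ∈ Finset.univ, (T.filter (fun p => p.1 = g)).card
          ≤ Finset.univ.card • 1 := Finset.sum_le_card_nsmul _ _ 1 hbound
        _ = Nat.factorial (2*m+1) := by
            simp [Finset.card_univ, Fintype.card_perm]
    -- Step B : lower bound for T.card
    have hB : F.card * (2*(2*m+1)) * m ≤ T.card := by
      rw [Finset.card_eq_sum_card_fiberwise
        (f := Prod.snd) (t := Finset.range m)
        (fun p hp => by
          rw [hT, Finset.mem_coe, Finset.mem_filter, Finset.mem_product] at hp
          exact hp.1.2)]
      have hterm : ∀ j ∈ Finset.range m,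
          F.card * (2*(2*m+1)) ≤ (T.filter (fun p => p.2 = j)).card := by
        intro j hj
        set S : Finset (Equiv.Perm (Fin (2*m+1))) :=
          Finset.univ.filter
            (fun g => hamCycleEdges (2*m+1) (g * ((wrot m)^j * wσ m)) ∈ F) with hS
        have himg : T.filter (fun p => p.2 = j) = S.image (fun g => (g, j)) := by
          ext p
          simp only [hT, hS, Finset.mem_filter, Finset.mem_image, Finset.mem_product,
            Finset.mem_univ, Finset.mem_range, true_and]
          constructor
          · rintro ⟨⟨-, hmem⟩, h2⟩
            subst h2
            exact ⟨p.1, hmem, rfl⟩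
          · rintro ⟨g, hg, rfl⟩
            exact ⟨⟨Finset.mem_range.mp hj, hg⟩, rfl⟩
        rw [himg, Finset.card_image_of_injective _ (fun a b h => (Prod.mk.injEq _ _ _ _).mp h |>.1)]
        -- now bound S.card from below
        rw [Finset.card_eq_sum_card_fiberwise
          (f := fun g => hamCycleEdges (2*m+1) (g * ((wrot m)^j * wσ m))) (t := F)
          (fun g hg => by rw [hS, Finset.mem_coe, Finset.mem_filter] at hg; exact hg.2)]
        calc F.card * (2*(2*m+1)) = F.card • (2*(2*m+1)) := by rw [smul_eq_mul]
          _ ≤ ∑ H ∈ F, (S.filter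
                (fun g => hamCycleEdges (2*m+1) (g * ((wrot m)^j * wσ m)) = H)).card := by
              apply Finset.card_nsmul_le_sum
              intro H hH
              obtain ⟨τ, rfl⟩ := hHam H hH
              have hfix : S.filter
                  (fun g => hamCycleEdges (2*m+1) (g * ((wrot m)^j * wσ m)) = hamCycleEdges (2*m+1) τ)
                  = Finset.univ.filter
                  (fun g => hamCycleEdges (2*m+1) (g * ((wrot m)^j * wσ m)) = hamCycleEdges (2*m+1) τ) := by
                ext g
                simp only [hS, Finset.mem_filter, Finset.mem_univ, true_and, and_iff_right_iff_imp]
                intro h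
                rw [h]
                exact hH
              rw [hfix]
              have := fiber_ge hn τ ((wrot m)^j * wσ m)
              omega
      calc F.card * (2*(2*m+1)) * m = ∑ _j ∈ Finset.range m, F.card * (2*(2*m+1)) := by
            rw [Finset.sum_const, Finset.card_range, smul_eq_mul, mul_comm]
        _ ≤ ∑ j ∈ Finset.range m, (T.filter (fun p => p.2 = j)).card :=
            Finset.sum_le_sum hterm
    -- combine
    have hfac : Nat.factorial (2*m+1) = Nat.factorial (2*m-1) * ((2*m+1) * (2*m)) := by
      obtain ⟨l, hl⟩ : ∃ l, m = l + 1 := ⟨m - 1, by omega⟩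
      subst hl
      have h1 : 2*(l+1)+1 = (2*l+1) + 1 + 1 := by ring
      have h2 : 2*(l+1)-1 = (2*l+1) := by omega
      rw [h1, h2, Nat.factorial_succ, Nat.factorial_succ]
      ring
    have hgoal2 : 2*m+1-2 = 2*m-1 := by omega
    rw [hgoal2]
    have harith : F.card * ((2*m+1) * (2*m)) ≤ Nat.factorial (2*m-1) * ((2*m+1) * (2*m)) := by
      calc F.card * ((2*m+1) * (2*m)) = F.card * (2*(2*m+1)) * m := by ring
        _ ≤ T.card := hB
        _ ≤ Nat.factorial (2*m+1) := hA
        _ = Nat.factorial (2*m-1) * ((2*m+1) * (2*m)) := hfac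
    exact Nat.le_of_mul_le_mul_right harith (by positivity)
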